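/- If a metric space X is of straight finite decomposition complexity, then X is of countable asymptotic dimension. -/

import Mathlib

/-- A family of subsets is `R`-disjoint if distinct members are at distance `> R`. -/
def RDisjointFam {X : Type*} [MetricSpace X] (R : ℝ) (𝒲 : Set (Set X)) : Prop :=
  ∀ U ∈ 𝒲, ∀ V ∈ 𝒲, U ≠ V → ∀ x ∈ U, ∀ y ∈ V, R < dist x y

/-- `𝒰` is uniformly bounded: there is `M > 0` bounding the diameters of all members. -/
def UnifBounded {X : Type*} [MetricSpace X] (𝒰 : Set (Set X)) : Prop :=
  ∃ M : ℝ, 0 < M ∧ ∀ U ∈ 𝒰, EMetric.diam U ≤ ENNReal.ofReal M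

/-- `U` can be expressed as a union of at most `k` families from `𝒱` that are
`R`-disjoint. -/
def UnionOfFams {X : Type*} [MetricSpace X] (k : ℕ) (R : ℝ) (𝒱 : Set (Set X))
    (U : Set X) : Prop :=
  ∃ 𝒲 : Fin k → Set (Set X), (∀ j, 𝒲 j ⊆ 𝒱 ∧ RDisjointFam R (𝒲 j)) ∧
    U = ⋃ j, ⋃₀ 𝒲 j

/-- `X` is of countable asymptotic dimension (Definition 7.1). -/
def CountableAsdim (X : Type*) [MetricSpace X] : Prop :=
  ∃ nseq : ℕ → ℕ, (∀ i, 1 ≤ nseq i) ∧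
    ∀ R : ℕ → ℝ, (∀ i, 0 < R i) →
      ∃ 𝒱 : ℕ → Set (Set X), 𝒱 1 = {Set.univ} ∧
        (∀ i, 1 ≤ i → ∀ U ∈ 𝒱 i, UnionOfFams (nseq i) (R i) (𝒱 (i + 1)) U) ∧
        ∃ m, 1 ≤ m ∧ UnifBounded (𝒱 m)

/-- `X` is of straight finite decomposition complexity (Dranishnikov–Zarichnyi). -/
def SFDC (X : Type*) [MetricSpace X] : Prop :=
  ∀ R : ℕ → ℝ, (∀ i, 0 < R i) → StrictMono R →
    ∃ n : ℕ, 1 ≤ n ∧ ∃ 𝒱 : ℕ → Set (Set X), 𝒱 1 = {Set.univ} ∧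
      (∀ i, 1 ≤ i → i < n → ∀ U ∈ 𝒱 i, UnionOfFams 2 (R i) (𝒱 (i + 1)) U) ∧
      UnifBounded (𝒱 n)

/-- Proposition 7.2. Every metric space of straight finite decomposition
complexity is of countable asymptotic dimension. -/
theorem stmt11 {X : Type*} [MetricSpace X] (h : SFDC X) : CountableAsdim X := by
  refine ⟨fun _ => 2, fun i => by norm_num, fun R hR => ?_⟩
  set R' : ℕ → ℝ := fun i => ∑ j ∈ Finset.range (i + 1), R j with hR'def
  have hR'pos : ∀ i, 0 < R' i := fun i =>
    Finset.sum_pos (fun j _ => hR j) ⟨0, Finset.mem_range.2 (Nat.succ_pos i)⟩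
  have hR'mono : StrictMono R' := strictMono_nat_of_lt_succ (fun i => by
    have hs : R' (i + 1) = R' i + R (i + 1) := Finset.sum_range_succ R (i + 1)
    rw [hs]; linarith [hR (i + 1)])
  have hle : ∀ i, R i ≤ R' i := fun i =>
    Finset.single_le_sum (fun j _ => (hR j).le) (Finset.mem_range.2 (Nat.lt_succ_self i))
  obtain ⟨n, hn1, 𝒱, hV1, hdec, hbd⟩ := h R' hR'pos hR'mono
  refine ⟨fun i => if i ≤ n then 𝒱 i else 𝒱 n, ?_, ?_, n, hn1, ?_⟩
  · simp [hn1, hV1]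
  · intro i hi U hU
    by_cases hin : i < n
    · have hi1 : i ≤ n := hin.le
      have hi2 : i + 1 ≤ n := hin
      simp only [if_pos hi1] at hU
      obtain ⟨𝒲, h𝒲, hUeq⟩ := hdec i hi hin U hU
      refine ⟨𝒲, fun j => ⟨by simpa [if_pos hi2, hin] using (h𝒲 j).1, ?_⟩, hUeq⟩
      intro A hA B hB hAB x hx y hy
      exact lt_of_le_of_lt (hle i) ((h𝒲 j).2 A hA B hB hAB x hx y hy)
    · have hUn : U ∈ 𝒱 n := by
        by_cases h' : i ≤ n
        · have : i = n := le_antisymm h' (not_lt.1 hin)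
          simpa [if_pos h', this] using hU
        · simpa [if_neg h'] using hU
      have hnot : ¬ (i + 1 ≤ n) := by omega
      refine ⟨fun _ => {U}, fun j => ⟨?_, ?_⟩, ?_⟩
      · intro V hV
        simp only [Set.mem_singleton_iff] at hV
        simp [if_neg hnot, hV, hUn, hin]
      · intro A hA B hB hAB
        simp_all
      · simp [Set.iUnion_const]
  · simpa using hbd
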